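/- The function α : ℝ × [0,∞) → [0,∞] defined by α(j,r) = (j₊)²/r if r > 0, α(j,r) = 0 if j ≤ 0 and r = 0, and α(j,r) = ∞ if j > 0 and r = 0, is jointly convex on ℝ × [0,∞). -/

import Mathlib

/-- The action density `α(j,r)`. -/
noncomputable def alphaFn (j r : ℝ) : ENNReal :=
  if 0 < r then ENNReal.ofReal ((max j 0) ^ 2 / r)
  else if j ≤ 0 then 0 else ⊤

lemma quad_div (a b s t : ℝ) (hs : 0 < s) (ht : 0 < t) :
    (a + b) ^ 2 / (s + t) ≤ a ^ 2 / s + b ^ 2 / t := by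
  rw [div_add_div _ _ (ne_of_gt hs) (ne_of_gt ht),
    div_le_div_iff₀ (by positivity) (by positivity)]
  nlinarith [sq_nonneg (a * t - b * s), mul_pos hs ht]

lemma alpha_pos (j r : ℝ) (hr : 0 < r) :
    alphaFn j r = ENNReal.ofReal ((max j 0) ^ 2 / r) := by
  simp [alphaFn, hr]

theorem stmt_4 :
    ∀ j₁ r₁ j₂ r₂ : ℝ, 0 ≤ r₁ → 0 ≤ r₂ →
      ∀ l : ℝ, 0 ≤ l → l ≤ 1 →
        alphaFn (l * j₁ + (1 - l) * j₂) (l * r₁ + (1 - l) * r₂)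
          ≤ ENNReal.ofReal l * alphaFn j₁ r₁
            + ENNReal.ofReal (1 - l) * alphaFn j₂ r₂ := by
  intro j₁ r₁ j₂ r₂ hr1 hr2 l hl0 hl1
  rcases eq_or_lt_of_le hl0 with h0 | h0
  · subst h0; norm_num
  rcases eq_or_lt_of_le hl1 with h1 | h1
  · subst h1; norm_num
  have hl' : 0 < 1 - l := by linarith
  by_cases hr : 0 < l * r₁ + (1 - l) * r₂
  · -- combined rate positive
    rw [alpha_pos _ _ hr]
    by_cases hr1' : 0 < r₁
    · by_cases hr2' : 0 < r₂
      · -- main case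
        rw [alpha_pos _ _ hr1', alpha_pos _ _ hr2',
          ← ENNReal.ofReal_mul hl0, ← ENNReal.ofReal_mul hl'.le,
          ← ENNReal.ofReal_add (by positivity) (by positivity)]
        apply ENNReal.ofReal_le_ofReal
        have hmax : max (l * j₁ + (1 - l) * j₂) 0 ≤ l * max j₁ 0 + (1 - l) * max j₂ 0 := by
          apply max_le
          · have := le_max_left j₁ (0:ℝ); have := le_max_left j₂ (0:ℝ); nlinarith
          · positivity
        have hsq : (max (l * j₁ + (1 - l) * j₂) 0) ^ 2 ≤
            (l * max j₁ 0 + (1 - l) * max j₂ 0) ^ 2 := by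
          apply pow_le_pow_left₀ (le_max_right _ _) hmax
        calc (max (l * j₁ + (1 - l) * j₂) 0) ^ 2 / (l * r₁ + (1 - l) * r₂)
            ≤ (l * max j₁ 0 + (1 - l) * max j₂ 0) ^ 2 / (l * r₁ + (1 - l) * r₂) := by
              exact div_le_div_of_nonneg_right hsq hr.le
          _ ≤ (l * max j₁ 0) ^ 2 / (l * r₁) + ((1 - l) * max j₂ 0) ^ 2 / ((1 - l) * r₂) :=
              quad_div _ _ _ _ (by positivity) (by positivity)
          _ = l * (max j₁ 0 ^ 2 / r₁) + (1 - l) * (max j₂ 0 ^ 2 / r₂) := by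
              field_simp
      · -- r₂ = 0
        have hr2'' : r₂ = 0 := le_antisymm (not_lt.mp hr2') hr2
        by_cases hj2 : j₂ ≤ 0
        · have h2 : alphaFn j₂ r₂ = 0 := by simp [alphaFn, hr2'', hj2]
          rw [h2, alpha_pos _ _ hr1', mul_zero, add_zero,
            ← ENNReal.ofReal_mul hl0]
          apply ENNReal.ofReal_le_ofReal
          have hmax : max (l * j₁ + (1 - l) * j₂) 0 ≤ l * max j₁ 0 := by
            apply max_le
            · nlinarith [le_max_left j₁ (0:ℝ)]
            · positivity
          have hrr : l * r₁ + (1 - l) * r₂ = l * r₁ := by rw [hr2'']; ring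
          rw [hrr]
          calc (max (l * j₁ + (1 - l) * j₂) 0) ^ 2 / (l * r₁)
              ≤ (l * max j₁ 0) ^ 2 / (l * r₁) := by
                apply div_le_div_of_nonneg_right _ (by positivity : (0:ℝ) ≤ _)
                exact pow_le_pow_left₀ (le_max_right _ _) hmax 2
            _ = l * (max j₁ 0 ^ 2 / r₁) := by field_simp
        · have h2 : alphaFn j₂ r₂ = ⊤ := by simp [alphaFn, hr2'', hj2]
          rw [h2, ENNReal.mul_top (by simp; linarith)]
          simp
    · -- r₁ = 0, r₂ > 0 necessarily
      have hr1'' : r₁ = 0 := le_antisymm (not_lt.mp hr1') hr1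
      have hr2' : 0 < r₂ := by
        rcases lt_or_ge 0 r₂ with h | h
        · exact h
        · exfalso; nlinarith
      by_cases hj1 : j₁ ≤ 0
      · have h1 : alphaFn j₁ r₁ = 0 := by simp [alphaFn, hr1'', hj1]
        rw [h1, alpha_pos _ _ hr2', mul_zero, zero_add,
          ← ENNReal.ofReal_mul hl'.le]
        apply ENNReal.ofReal_le_ofReal
        have hmax : max (l * j₁ + (1 - l) * j₂) 0 ≤ (1 - l) * max j₂ 0 := by
          apply max_le
          · nlinarith [le_max_left j₂ (0:ℝ)]
          · positivity
        have hrr : l * r₁ + (1 - l) * r₂ = (1 - l) * r₂ := by rw [hr1'']; ring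
        rw [hrr]
        calc (max (l * j₁ + (1 - l) * j₂) 0) ^ 2 / ((1 - l) * r₂)
            ≤ ((1 - l) * max j₂ 0) ^ 2 / ((1 - l) * r₂) := by
              apply div_le_div_of_nonneg_right _ (by positivity : (0:ℝ) ≤ _)
              exact pow_le_pow_left₀ (le_max_right _ _) hmax 2
          _ = (1 - l) * (max j₂ 0 ^ 2 / r₂) := by field_simp
      · have h1 : alphaFn j₁ r₁ = ⊤ := by simp [alphaFn, hr1'', hj1]
        rw [h1, ENNReal.mul_top (by simp [h0])]
        simp
  · -- combined rate zero: r₁ = r₂ = 0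
    have hr1'' : r₁ = 0 := by nlinarith
    have hr2'' : r₂ = 0 := by nlinarith
    have hrr : l * r₁ + (1 - l) * r₂ = 0 := by rw [hr1'', hr2'']; ring
    by_cases hj : l * j₁ + (1 - l) * j₂ ≤ 0
    · have : alphaFn (l * j₁ + (1 - l) * j₂) (l * r₁ + (1 - l) * r₂) = 0 := by
        simp [alphaFn, hrr, hj]
      rw [this]; exact zero_le
    · push_neg at hj
      have : 0 < j₁ ∨ 0 < j₂ := by
        by_contra h
        push_neg at h
        nlinarith [h.1, h.2]
      rcases this with hj1 | hj2
      · have h1 : alphaFn j₁ r₁ = ⊤ := by simp [alphaFn, hr1'', not_le.mpr hj1]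
        rw [h1, ENNReal.mul_top (by simp [h0])]
        simp
      · have h2 : alphaFn j₂ r₂ = ⊤ := by simp [alphaFn, hr2'', not_le.mpr hj2]
        rw [h2, ENNReal.mul_top (by simp; linarith)]
        simp
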